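/- Let x, y, z, u : ℂ → ℂ satisfy the system x' = (u + y² + z²)x, y' = (u + y² - 2z²)y, z' = (u - 2y² + z²)z, u' = u² - y⁴ + y²z² - z⁴, and define X = u + y² + z², Y = u + y² - 2z², Z = u - 2y² + z². Then (X, Y, Z) satisfies the Darboux–Halphen system X' = (Y+Z)X - YZ, Y' = (X+Z)Y - XZ, Z' = (X+Y)Z - XY. -/

import Mathlib

open Complex

/-- System (19) implies the Darboux–Halphen system for `X, Y, Z` defined by (41). -/
theorem system19_darboux_halphen (x y z u X Y Z : ℂ → ℂ)
    (hx : Differentiable ℂ x) (hy : Differentiable ℂ y)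
    (hz : Differentiable ℂ z) (hu : Differentiable ℂ u)
    (hdx : ∀ τ, deriv x τ = (u τ + (y τ) ^ 2 + (z τ) ^ 2) * x τ)
    (hdy : ∀ τ, deriv y τ = (u τ + (y τ) ^ 2 - 2 * (z τ) ^ 2) * y τ)
    (hdz : ∀ τ, deriv z τ = (u τ - 2 * (y τ) ^ 2 + (z τ) ^ 2) * z τ)
    (hdu : ∀ τ, deriv u τ = (u τ) ^ 2 - (y τ) ^ 4 + (y τ) ^ 2 * (z τ) ^ 2 - (z τ) ^ 4)
    (hX : ∀ τ, X τ = u τ + (y τ) ^ 2 + (z τ) ^ 2)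
    (hY : ∀ τ, Y τ = u τ + (y τ) ^ 2 - 2 * (z τ) ^ 2)
    (hZ : ∀ τ, Z τ = u τ - 2 * (y τ) ^ 2 + (z τ) ^ 2) :
    (∀ τ, deriv X τ = (Y τ + Z τ) * X τ - Y τ * Z τ) ∧
    (∀ τ, deriv Y τ = (X τ + Z τ) * Y τ - X τ * Z τ) ∧
    (∀ τ, deriv Z τ = (X τ + Y τ) * Z τ - X τ * Y τ) := by
  have hXf : X = fun τ => u τ + (y τ) ^ 2 + (z τ) ^ 2 := funext hX
  have hYf : Y = fun τ => u τ + (y τ) ^ 2 - 2 * (z τ) ^ 2 := funext hY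
  have hZf : Z = fun τ => u τ - 2 * (y τ) ^ 2 + (z τ) ^ 2 := funext hZ
  have hy2 : ∀ τ, deriv (fun t => (y t) ^ 2) τ = 2 * y τ * deriv y τ := by
    intro τ
    have := ((hy τ).hasDerivAt.pow 2).deriv
    exact this.trans (by norm_num)
  have hz2 : ∀ τ, deriv (fun t => (z t) ^ 2) τ = 2 * z τ * deriv z τ := by
    intro τ
    have := ((hz τ).hasDerivAt.pow 2).deriv
    exact this.trans (by norm_num)
  have dy2 : Differentiable ℂ fun t => (y t) ^ 2 := hy.pow 2
  have dz2 : Differentiable ℂ fun t => (z t) ^ 2 := hz.pow 2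
  refine ⟨?_, ?_, ?_⟩ <;> intro τ
  · rw [hXf, deriv_fun_add ((hu τ).fun_add (dy2 τ)) (dz2 τ), deriv_fun_add (hu τ) (dy2 τ),
      hy2, hz2, hdu, hdy, hdz]
    simp only [hX, hY, hZ]; ring
  · rw [hYf, deriv_fun_sub ((hu τ).fun_add (dy2 τ)) ((dz2.const_mul 2) τ),
      deriv_fun_add (hu τ) (dy2 τ), deriv_const_mul 2 (dz2 τ),
      hy2, hz2, hdu, hdy, hdz]
    simp only [hX, hY, hZ]; ring
  · rw [hZf, deriv_fun_add ((hu τ).fun_sub ((dy2.const_mul 2) τ)) (dz2 τ),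
      deriv_fun_sub (hu τ) ((dy2.const_mul 2) τ), deriv_const_mul 2 (dy2 τ),
      hy2, hz2, hdu, hdy, hdz]
    simp only [hX, hY, hZ]; ring
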